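/- If p and q are MP-words and the standard form of q^{-1} p (with respect to Σ) is p' (q')^{-1} with p', q' MP-words, then μ(p') ≤ μ(p) + |q|, where μ denotes the maximal subscript occurring in a word. -/

import Mathlib

abbrev Letter := ℕ × Bool
abbrev Word := List Letter

def pos (i : ℕ) : Letter := (i, true)
def neg (i : ℕ) : Letter := (i, false)

/-- The rewriting rules of the system Σ. -/
inductive SigmaRule : Word → Word → Prop
  | cancel (i : ℕ) : SigmaRule [neg i, pos i] [pos i, neg i]
  | negPos (i j : ℕ) (h : i < j) : SigmaRule [neg i, pos j] [pos (j+1), neg i]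
  | posNegInv (i j : ℕ) (h : i < j) : SigmaRule [neg j, pos i] [pos i, neg (j+1)]
  | posPos (i j : ℕ) (h : i < j) : SigmaRule [pos j, pos i] [pos i, pos (j+1)]
  | negNeg (i j : ℕ) (h : i < j) : SigmaRule [neg i, neg j] [neg (j+1), neg i]

/-- One rewriting step: replace an occurrence of a left-hand side by the right-hand side. -/
def Step (u v : Word) : Prop :=
  ∃ a b l r : Word, SigmaRule l r ∧ u = a ++ l ++ b ∧ v = a ++ r ++ b

/-- A word is Σ-irreducible if no rule applies. -/
def SigmaIrreducible (w : Word) : Prop := ∀ v, ¬ Step w v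

/-- Maximal subscript occurring in a positive word (0 for the empty word). -/
def mu (l : List ℕ) : ℕ := l.foldr max 0

/-- If `p`, `q` are MP-words and the standard form of `q⁻¹ p` is `p' (q')⁻¹` with
`p'`, `q'` MP-words, then `μ(p') ≤ μ(p) + |q|`. -/
-- auxiliary machinery
def upd (k : ℕ) (s : Option ℕ) : Option ℕ := s.map (fun b => if k < b then b + 1 else b)

def invAux : Option ℕ → Word → Prop
  | _, [] => True
  | s, (k, true) :: rest => (∀ b ∈ s, k ≤ b) ∧ invAux (some k) rest
  | s, (k, false) :: rest => invAux (upd k s) rest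

def stA : Option ℕ → Word → Option ℕ
  | s, [] => s
  | _, (k, true) :: rest => stA (some k) rest
  | s, (k, false) :: rest => stA (upd k s) rest

def phiA : ℕ → Word → ℕ
  | _, [] => 0
  | c, (k, true) :: rest => max (k + c) (phiA c rest)
  | c, (k, false) :: rest => phiA (c + 1) rest

def negsOf : Word → ℕ
  | [] => 0
  | (_, true) :: rest => negsOf rest
  | (_, false) :: rest => negsOf rest + 1

lemma invAux_append (x : Word) : ∀ (s : Option ℕ) (y : Word),
    invAux s (x ++ y) ↔ invAux s x ∧ invAux (stA s x) y := by
  induction x with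
  | nil => intro s y; simp [invAux, stA]
  | cons hd tl ih =>
    intro s y
    obtain ⟨k, b⟩ := hd
    cases b <;> simp [invAux, stA, ih, and_assoc]

lemma negsOf_append (x y : Word) : negsOf (x ++ y) = negsOf x + negsOf y := by
  induction x with
  | nil => simp [negsOf]
  | cons hd tl ih => obtain ⟨k, b⟩ := hd; cases b <;> simp [negsOf, ih] <;> omega

lemma phiA_append (x : Word) : ∀ (c : ℕ) (y : Word),
    phiA c (x ++ y) = max (phiA c x) (phiA (c + negsOf x) y) := by
  induction x with
  | nil => intro c y; simp [phiA, negsOf]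
  | cons hd tl ih =>
    intro c y
    obtain ⟨k, b⟩ := hd
    cases b <;> simp [phiA, negsOf, ih, max_assoc]
    · rw [show c + 1 + negsOf tl = c + (negsOf tl + 1) by omega]

lemma rule_key {l r : Word} (h : SigmaRule l r) (s : Option ℕ)
    (hl : invAux s l.reverse) :
    invAux s r.reverse ∧ stA s r.reverse = stA s l.reverse ∧
      (∀ c, phiA c r ≤ phiA c l) ∧ negsOf r = negsOf l := by
  cases h with
  | cancel i =>
    refine ⟨?_, ?_, ?_, ?_⟩
    · cases s with
      | none => simp [invAux, upd, pos, neg]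
      | some b =>
        simp [invAux, upd, pos, neg] at hl ⊢
        split <;> omega
    · cases s <;> simp [stA, upd, pos, neg]
    · intro c; simp [phiA, pos, neg] <;> omega
    · simp [negsOf, pos, neg]
  | negPos i j hij =>
    refine ⟨?_, ?_, ?_, ?_⟩
    · cases s with
      | none => simp [invAux, upd, pos, neg]
      | some b =>
        simp [invAux, upd, pos, neg] at hl ⊢
        split <;> omega
    · cases s <;> simp [stA, upd, pos, neg, hij]
    · intro c; simp [phiA, pos, neg] <;> omega
    · simp [negsOf, pos, neg]
  | posNegInv i j hij =>
    refine ⟨?_, ?_, ?_, ?_⟩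
    · cases s with
      | none => simp [invAux, upd, pos, neg]
      | some b =>
        simp [invAux, upd, pos, neg] at hl ⊢
        split <;> omega
    · cases s <;> simp [stA, upd, pos, neg, show ¬ j < i by omega]
    · intro c; simp [phiA, pos, neg] <;> omega
    · simp [negsOf, pos, neg]
  | posPos i j hij =>
    exfalso
    simp [invAux, pos, neg] at hl
    omega
  | negNeg i j hij =>
    refine ⟨?_, ?_, ?_, ?_⟩
    · cases s <;> simp [invAux, upd, pos, neg]
    · cases s with
      | none => simp [stA, upd, pos, neg]
      | some b => simp [stA, upd, pos, neg]; split_ifs <;> omega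
    · intro c; simp [phiA, pos, neg]
    · simp [negsOf, pos, neg]

lemma step_key {w v : Word} (hI : invAux none w.reverse) (hs : Step w v) :
    invAux none v.reverse ∧ phiA 0 v ≤ phiA 0 w := by
  obtain ⟨a, b, l, r, hrule, hw, hv⟩ := hs
  subst hw; subst hv
  rw [show (a ++ l ++ b).reverse = b.reverse ++ (l.reverse ++ a.reverse) by simp] at hI
  rw [invAux_append, invAux_append] at hI
  obtain ⟨hb, hl, ha⟩ := hI
  obtain ⟨h1, h2, h3, h4⟩ := rule_key hrule _ hl
  constructor
  · rw [show (a ++ r ++ b).reverse = b.reverse ++ (r.reverse ++ a.reverse) by simp]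
    rw [invAux_append, invAux_append]
    exact ⟨hb, h1, h2 ▸ ha⟩
  · rw [show a ++ r ++ b = a ++ (r ++ b) by simp,
        show a ++ l ++ b = a ++ (l ++ b) by simp,
        phiA_append, phiA_append, phiA_append, phiA_append, h4]
    exact max_le_max le_rfl (max_le_max (h3 _) le_rfl)

lemma invAux_negs (x : List ℕ) : ∀ s, invAux s (x.map neg) := by
  induction x with
  | nil => intro s; simp [invAux]
  | cons hd tl ih => intro s; simpa [invAux, neg] using ih _

lemma invAux_pos_sorted (x : List ℕ) : ∀ s : Option ℕ, x.Pairwise (· ≥ ·) →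
    (∀ m ∈ x, ∀ b ∈ s, m ≤ b) → invAux s (x.map pos) := by
  induction x with
  | nil => intro s _ _; simp [invAux]
  | cons hd tl ih =>
    intro s hsort hbd
    rw [List.pairwise_cons] at hsort
    refine ⟨hbd hd (by simp), ih _ hsort.2 ?_⟩
    intro m hm b hb
    simp at hb
    subst hb
    exact hsort.1 m hm

lemma phiA_neg_eq (x : List ℕ) : ∀ c, phiA c (x.map neg) = 0 := by
  induction x with
  | nil => intro c; simp [phiA]
  | cons hd tl ih => intro c; simpa [phiA, neg] using ih _

lemma negsOf_negs (x : List ℕ) : negsOf (x.map neg) = x.length := by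
  induction x with
  | nil => simp [negsOf]
  | cons hd tl ih => simp [negsOf, neg, ih]

lemma phiA_pos_le (x : List ℕ) (c : ℕ) : phiA c (x.map pos) ≤ mu x + c := by
  induction x with
  | nil => simp [phiA, mu]
  | cons hd tl ih =>
    simp only [List.map_cons, phiA, pos, mu, List.foldr] at *
    omega

lemma mu_le_phiA_pos (x : List ℕ) (c : ℕ) : mu x ≤ phiA c (x.map pos) := by
  induction x with
  | nil => simp [phiA, mu]
  | cons hd tl ih =>
    simp only [List.map_cons, phiA, pos, mu, List.foldr] at *
    omega


theorem mu_of_standard_form_of_conj (p q p' q' : List ℕ)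
    (hp : List.Pairwise (· ≤ ·) p) (hq : List.Pairwise (· ≤ ·) q)
    (hp' : List.Pairwise (· ≤ ·) p') (hq' : List.Pairwise (· ≤ ·) q')
    (hr : Relation.ReflTransGen Step (q.reverse.map neg ++ p.map pos)
      (p'.map pos ++ q'.reverse.map neg))
    (hirr : SigmaIrreducible (p'.map pos ++ q'.reverse.map neg)) :
    mu p' ≤ mu p + q.length := by
  have key : ∀ {u v : Word}, Relation.ReflTransGen Step u v → invAux none u.reverse →
      invAux none v.reverse ∧ phiA 0 v ≤ phiA 0 u := by
    intro u v h
    induction h with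
    | refl => exact fun h0 => ⟨h0, le_refl _⟩
    | tail _ hstep ih =>
      intro h0
      obtain ⟨h1, h2⟩ := ih h0
      obtain ⟨h3, h4⟩ := step_key h1 hstep
      exact ⟨h3, h4.trans h2⟩
  have hinit : invAux none ((q.reverse.map neg ++ p.map pos)).reverse := by
    rw [List.reverse_append, ← List.map_reverse, ← List.map_reverse, List.reverse_reverse]
    rw [invAux_append]
    refine ⟨invAux_pos_sorted _ _ ?_ ?_, invAux_negs _ _⟩
    · exact List.pairwise_reverse.mpr hp
    · intro m _ b hb
      simp at hb
  obtain ⟨_, hphi⟩ := key hr hinit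
  have h1 : phiA 0 (q.reverse.map neg ++ p.map pos) ≤ mu p + q.length := by
    rw [phiA_append, phiA_neg_eq, negsOf_negs]
    have := phiA_pos_le p (0 + q.length)
    simp at this ⊢
    omega
  have h2 : mu p' ≤ phiA 0 (p'.map pos ++ q'.reverse.map neg) := by
    rw [phiA_append]
    exact le_trans (mu_le_phiA_pos p' 0) (le_max_left _ _)
  omega
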